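/- arXiv:2001.03146 — 5 statements merged into one kernel-verified Lean document; each statement's English description precedes it below -/
import Mathlib

section
/- Let w, b ∈ ℂ^n and σ > 0. For every n×n complex positive semidefinite Hermitian matrix A with trace A = 1, one has Re(wᴴ A w) / (Re(bᴴ A b) + σ) ≤ sup over unit vectors v ∈ ℂ^n of |wᴴ v|² / (|bᴴ v|² + σ). (Thus the supremum of the ratio over trace-one PSD matrices equals its supremum over rank-one orthogonal projections, i.e., a single transmit direction is optimal.) -/
open Matrix
open scoped ComplexOrder

lemma sum_rot (n : ℕ) (f : Fin n → Fin n → Fin n → ℂ) :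
    ∑ i, ∑ j, ∑ k, f i j k = ∑ k, ∑ i, ∑ j, f i j k := by
  have h1 : ∀ i, ∑ j, ∑ k, f i j k = ∑ k, ∑ j, f i j k := fun i => Finset.sum_comm
  simp_rw [h1]
  exact Finset.sum_comm

lemma quad_sum (n : ℕ) (U : Matrix (Fin n) (Fin n) ℂ) (d : Fin n → ℝ) (w : Fin n → ℂ) :
    star w ⬝ᵥ (U * Matrix.diagonal (fun k => (d k : ℂ)) * star U).mulVec w
      = ∑ k, (d k : ℂ) * (‖star w ⬝ᵥ (fun j => U j k)‖ : ℂ) ^ 2 := by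
  have hM : ∀ i j, (U * Matrix.diagonal (fun k => (d k : ℂ)) * star U) i j
      = ∑ k, U i k * (d k : ℂ) * (starRingEnd ℂ) (U j k) := by
    intro i j
    rw [Matrix.mul_apply]
    simp [Matrix.mul_diagonal, Matrix.star_apply]
  have lhs_eq : star w ⬝ᵥ (U * Matrix.diagonal (fun k => (d k : ℂ)) * star U).mulVec w
      = ∑ i, ∑ j, ∑ k, (starRingEnd ℂ) (w i) * U i k * (d k : ℂ) * (starRingEnd ℂ) (U j k) * w j := by
    simp only [dotProduct, Matrix.mulVec, Pi.star_apply, RCLike.star_def, hM,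
      Finset.mul_sum, Finset.sum_mul]
    refine Finset.sum_congr rfl fun i _ => Finset.sum_congr rfl fun j _ =>
      Finset.sum_congr rfl fun k _ => by ring
  have rhs_eq : ∀ k : Fin n, ((d k : ℂ)) * (‖star w ⬝ᵥ (fun j => U j k)‖ : ℂ) ^ 2
      = ∑ i, ∑ j, (starRingEnd ℂ) (w i) * U i k * (d k : ℂ) * (starRingEnd ℂ) (U j k) * w j := by
    intro k
    have h0 : ((‖star w ⬝ᵥ (fun j => U j k)‖ : ℂ)) ^ 2
        = (∑ i, (starRingEnd ℂ) (w i) * U i k) * (starRingEnd ℂ) (∑ j, (starRingEnd ℂ) (w j) * U j k) := by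
      rw [← Complex.mul_conj']; rfl
    rw [h0, map_sum]
    simp only [_root_.map_mul, Complex.conj_conj, Finset.mul_sum, Finset.sum_mul]
    rw [Finset.sum_comm]
    refine Finset.sum_congr rfl fun i _ => Finset.sum_congr rfl fun j _ => by ring
  rw [lhs_eq, sum_rot]
  exact Finset.sum_congr rfl fun k _ => (rhs_eq k).symm

/-- The SNR-type ratio at any trace-one PSD covariance is bounded by the
supremum of the corresponding ratio over unit vectors (rank-one directions). -/
theorem stmt_1 (n : ℕ) (w b : Fin n → ℂ) (σ : ℝ) (hσ : 0 < σ)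
    (A : Matrix (Fin n) (Fin n) ℂ) (hA : A.PosSemidef) (htr : A.trace = 1) :
    (star w ⬝ᵥ A.mulVec w).re / ((star b ⬝ᵥ A.mulVec b).re + σ)
      ≤ sSup { r : ℝ | ∃ v : Fin n → ℂ, (∑ i, ‖v i‖ ^ 2) = 1 ∧
          r = ‖star w ⬝ᵥ v‖ ^ 2 / (‖star b ⬝ᵥ v‖ ^ 2 + σ) } := by
  classical
  rcases Nat.eq_zero_or_pos n with hn | hn
  · exfalso
    subst hn
    simp [Matrix.trace] at htr
  set S := { r : ℝ | ∃ v : Fin n → ℂ, (∑ i, ‖v i‖ ^ 2) = 1 ∧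
      r = ‖star w ⬝ᵥ v‖ ^ 2 / (‖star b ⬝ᵥ v‖ ^ 2 + σ) } with hS
  have hH := hA.1
  set U : Matrix (Fin n) (Fin n) ℂ := (hH.eigenvectorUnitary : Matrix (Fin n) (Fin n) ℂ) with hU
  set d : Fin n → ℝ := hH.eigenvalues with hd
  have hspec : A = U * Matrix.diagonal (fun k => (d k : ℂ)) * star U := hH.spectral_theorem
  have hUU : star U * U = 1 := Unitary.coe_star_mul_self hH.eigenvectorUnitary
  set x : Fin n → ℝ := fun k => ‖star w ⬝ᵥ (fun j => U j k)‖ ^ 2 with hx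
  set y : Fin n → ℝ := fun k => ‖star b ⬝ᵥ (fun j => U j k)‖ ^ 2 with hy
  have hdnn : ∀ k, 0 ≤ d k := hA.eigenvalues_nonneg
  -- trace gives sum of eigenvalues = 1
  have hsum : ∑ k, d k = 1 := by
    have h1 : A.trace = ∑ k, (d k : ℂ) := by
      rw [hspec, Matrix.trace_mul_cycle, hUU, one_mul, Matrix.trace_diagonal]
    rw [htr] at h1
    have := congrArg Complex.re h1
    simpa using this.symm
  -- columns are unit vectors
  have hunit : ∀ k, ∑ j, ‖U j k‖ ^ 2 = 1 := by
    intro k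
    have h1 : (star U * U) k k = (1 : ℂ) := by rw [hUU]; simp
    rw [Matrix.mul_apply] at h1
    simp only [Matrix.star_apply, RCLike.star_def] at h1
    have h2 : (∑ j, ((‖U j k‖ : ℂ)) ^ 2) = 1 := by
      rw [← h1]
      refine Finset.sum_congr rfl fun j _ => ?_
      rw [mul_comm, Complex.mul_conj']
    have h3 : ((∑ j, ‖U j k‖ ^ 2 : ℝ) : ℂ) = 1 := by push_cast; exact h2
    exact_mod_cast h3
  -- quadratic forms
  have hnumw : (star w ⬝ᵥ A.mulVec w).re = ∑ k, d k * x k := by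
    rw [hspec, quad_sum]
    simp only [← Complex.ofReal_pow, ← Complex.ofReal_mul, ← Complex.ofReal_sum,
      Complex.ofReal_re]
    rfl
  have hnumb : (star b ⬝ᵥ A.mulVec b).re = ∑ k, d k * y k := by
    rw [hspec, quad_sum]
    simp only [← Complex.ofReal_pow, ← Complex.ofReal_mul, ← Complex.ofReal_sum,
      Complex.ofReal_re]
    rfl
  -- S is bounded above
  have hbdd : BddAbove S := by
    refine ⟨(∑ j, ‖w j‖) ^ 2 / σ, ?_⟩
    rintro r ⟨v, hv1, rfl⟩
    have hnb : ‖star w ⬝ᵥ v‖ ≤ ∑ j, ‖w j‖ := by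
      refine le_trans (norm_sum_le _ _) (Finset.sum_le_sum fun j _ => ?_)
      have hvj : ‖v j‖ ≤ 1 := by
        have h2 : ‖v j‖ ^ 2 ≤ 1 := by
          rw [← hv1]
          exact Finset.single_le_sum (fun i _ => sq_nonneg ‖v i‖) (Finset.mem_univ j)
        nlinarith [norm_nonneg (v j)]
      calc ‖(star w) j * v j‖ = ‖w j‖ * ‖v j‖ := by simp [norm_mul]
        _ ≤ ‖w j‖ * 1 := by
            exact mul_le_mul_of_nonneg_left hvj (norm_nonneg _)
        _ = ‖w j‖ := mul_one _
    have hnum : ‖star w ⬝ᵥ v‖ ^ 2 ≤ (∑ j, ‖w j‖) ^ 2 := by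
      exact pow_le_pow_left₀ (norm_nonneg _) hnb 2
    exact div_le_div₀ (sq_nonneg _) hnum hσ (by nlinarith [sq_nonneg ‖star b ⬝ᵥ v‖])
  -- each column ratio is in S
  have hmem : ∀ k : Fin n, x k / (y k + σ) ∈ S := by
    intro k
    exact ⟨fun j => U j k, hunit k, rfl⟩
  set M := sSup S with hM
  have hden_pos : ∀ k, 0 < y k + σ := fun k => by positivity
  have hkey : ∀ k, x k ≤ M * (y k + σ) := by
    intro k
    have h1 : x k / (y k + σ) ≤ M := le_csSup hbdd (hmem k)
    exact (div_le_iff₀ (hden_pos k)).mp h1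
  have hDpos : 0 < (∑ k, d k * y k) + σ := by
    have : 0 ≤ ∑ k, d k * y k :=
      Finset.sum_nonneg fun k _ => mul_nonneg (hdnn k) (by positivity)
    linarith
  rw [hnumw, hnumb, div_le_iff₀ hDpos]
  calc ∑ k, d k * x k ≤ ∑ k, d k * (M * (y k + σ)) :=
        Finset.sum_le_sum fun k _ => mul_le_mul_of_nonneg_left (hkey k) (hdnn k)
    _ = ∑ k, (M * (d k * y k) + (M * σ) * d k) :=
        Finset.sum_congr rfl fun k _ => by ring
    _ = M * (∑ k, d k * y k) + (M * σ) * ∑ k, d k := by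
        rw [Finset.sum_add_distrib, Finset.mul_sum, Finset.mul_sum]
    _ = M * ((∑ k, d k * y k) + σ) := by rw [hsum]; ring
end

section
/- (Optimal jammer strategy with full CSI, single-antenna Bob.) Let w, b ∈ ℂ^N with w ≠ 0, let σ > 0, and set B := b bᴴ + σ·I (an N×N Hermitian positive definite matrix). Then for every N×N complex positive semidefinite Hermitian matrix A with trace A = 1, Re(wᴴ A w) / (Re(bᴴ A b) + σ) ≤ Re(wᴴ B⁻¹ w), and equality holds for the rank-one matrix A* = v* (v*)ᴴ, where v* = B⁻¹w / ‖B⁻¹w‖. Hence the optimal normalized covariance is rank one: beamforming all power in the single direction v*. -/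
open Matrix
open scoped ComplexOrder

private lemma cs_aux {N : ℕ} {B : Matrix (Fin N) (Fin N) ℂ} (hB : B.PosSemidef) (x y : Fin N → ℂ) :
    ‖star x ⬝ᵥ B *ᵥ y‖ ^ 2 ≤ (star x ⬝ᵥ B *ᵥ x).re * (star y ⬝ᵥ B *ᵥ y).re := by
  letI c : PreInnerProductSpace.Core ℂ (Fin N → ℂ) :=
    { inner := fun u v => star u ⬝ᵥ B *ᵥ v
      conj_inner_symm := fun u v => by
        show star (star v ⬝ᵥ B *ᵥ u) = star u ⬝ᵥ B *ᵥ v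
        rw [star_dotProduct, star_star, star_mulVec, dotProduct_mulVec, hB.isHermitian.eq]
      re_inner_nonneg := fun u => by
        have := hB.dotProduct_mulVec_nonneg u
        rw [Complex.nonneg_iff] at this
        exact this.1
      add_left := fun u v z => by
        show star (u + v) ⬝ᵥ _ = _
        rw [star_add, add_dotProduct]
      smul_left := fun u v r => by
        show star (r • u) ⬝ᵥ _ = _
        rw [star_smul, smul_dotProduct]
        rfl }
  have h := @InnerProductSpace.Core.inner_mul_inner_self_le ℂ (Fin N → ℂ) _ _ _ c x y
  have h1 : (@inner ℂ _ (InnerProductSpace.Core.toPreInner') x y : ℂ) = star x ⬝ᵥ B *ᵥ y := rfl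
  have h2 : (@inner ℂ _ (InnerProductSpace.Core.toPreInner') y x : ℂ)
      = star ((@inner ℂ _ (InnerProductSpace.Core.toPreInner') x y : ℂ)) := (c.conj_inner_symm y x).symm
  rw [h2, h1, norm_star] at h
  rw [pow_two]
  exact h

private lemma star_mul_self_re (z : ℂ) : (star z * z).re = ‖z‖ ^ 2 := by
  rw [Complex.star_def, ← Complex.normSq_eq_conj_mul_self, Complex.ofReal_re, ← Complex.sq_norm]

private lemma vmv_mulVec {N : ℕ} (v u x : Fin N → ℂ) :
    (vecMulVec v u) *ᵥ x = (u ⬝ᵥ x) • v := by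
  ext i
  simp [vecMulVec_apply, mulVec, dotProduct, Finset.mul_sum, mul_assoc, mul_comm, mul_left_comm]

private lemma dot_self_eq {N : ℕ} (y : Fin N → ℂ) :
    star y ⬝ᵥ y = ((∑ i, ‖y i‖ ^ 2 : ℝ) : ℂ) := by
  rw [dotProduct, Complex.ofReal_sum]
  refine Finset.sum_congr rfl fun i _ => ?_
  rw [Pi.star_apply, Complex.star_def, ← Complex.normSq_eq_conj_mul_self]
  norm_cast
  rw [← Complex.sq_norm]

private lemma dot_self_re {N : ℕ} (y : Fin N → ℂ) :
    (star y ⬝ᵥ y).re = ∑ i, ‖y i‖ ^ 2 := by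
  rw [dot_self_eq, Complex.ofReal_re]

private lemma quad_CT {N : ℕ} (C : Matrix (Fin N) (Fin N) ℂ) (x : Fin N → ℂ) :
    star x ⬝ᵥ (Cᴴ * C) *ᵥ x = star (C *ᵥ x) ⬝ᵥ (C *ᵥ x) := by
  rw [← mulVec_mulVec, dotProduct_mulVec, ← star_mulVec]

private lemma star_dot {N : ℕ} (x y : Fin N → ℂ) : star (star x ⬝ᵥ y) = star y ⬝ᵥ x := by
  rw [star_dotProduct, star_star]

private lemma vmv_posSemidef {N : ℕ} (v : Fin N → ℂ) : (vecMulVec v (star v)).PosSemidef := by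
  have h : vecMulVec v (star v) = replicateCol Unit v * (replicateCol Unit v)ᴴ := by
    rw [conjTranspose_replicateCol]
    exact vecMulVec_eq Unit v (star v)
  rw [h]
  exact posSemidef_self_mul_conjTranspose _

/-- Optimal jammer strategy with full CSI and single-antenna Bob: the ratio at any
trace-one PSD covariance is at most `wᴴ(b bᴴ + σI)⁻¹w`, with equality at the rank-one
beamformer `v* (v*)ᴴ`, `v* = B⁻¹w/‖B⁻¹w‖`. -/
theorem stmt_3 (N : ℕ) (w b : Fin N → ℂ) (hw : w ≠ 0) (σ : ℝ) (hσ : 0 < σ)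
    (B : Matrix (Fin N) (Fin N) ℂ)
    (hB : B = vecMulVec b (star b) + (σ : ℂ) • 1)
    (vstar : Fin N → ℂ)
    (hv : vstar = ((Real.sqrt (∑ i, ‖(B⁻¹.mulVec w) i‖ ^ 2) : ℝ) : ℂ)⁻¹ • B⁻¹.mulVec w)
    (Astar : Matrix (Fin N) (Fin N) ℂ)
    (hAstar : Astar = vecMulVec vstar (star vstar)) :
    (∀ A : Matrix (Fin N) (Fin N) ℂ, A.PosSemidef → A.trace = 1 →
      (star w ⬝ᵥ A.mulVec w).re / ((star b ⬝ᵥ A.mulVec b).re + σ)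
        ≤ (star w ⬝ᵥ B⁻¹.mulVec w).re) ∧
    Astar.PosSemidef ∧ Astar.trace = 1 ∧
    (star w ⬝ᵥ Astar.mulVec w).re / ((star b ⬝ᵥ Astar.mulVec b).re + σ)
      = (star w ⬝ᵥ B⁻¹.mulVec w).re := by
  have hbb : (vecMulVec b (star b)).PosSemidef := vmv_posSemidef b
  have hσ1 : ((σ : ℂ) • (1 : Matrix (Fin N) (Fin N) ℂ)).PosDef := by
    have h1 : ((σ : ℂ) • (1 : Matrix (Fin N) (Fin N) ℂ)) = diagonal (fun _ => (σ : ℂ)) := by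
      ext i j
      by_cases h : i = j <;> simp [h, Matrix.one_apply, diagonal]
    rw [h1, posDef_diagonal_iff]
    intro _
    exact_mod_cast hσ
  have hBpd : B.PosDef := hB ▸ Matrix.PosDef.posSemidef_add hbb hσ1
  have hBipd : B⁻¹.PosDef := hBpd.inv
  have hBmul : B * B⁻¹ = 1 := mul_nonsing_inv B hBpd.det_pos.ne'.isUnit
  set m : Fin N → ℂ := B⁻¹ *ᵥ w with hm
  have hBm : B *ᵥ m = w := by rw [hm, mulVec_mulVec, hBmul, one_mulVec]
  have hmne : m ≠ 0 := fun h => hw (by rw [← hBm, h, mulVec_zero])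
  set t : ℂ := star w ⬝ᵥ m with htdef
  have htpos : 0 < t := hBipd.dotProduct_mulVec_pos hw
  have htre : 0 < t.re := (Complex.lt_def.1 htpos).1
  have htim : t.im = 0 := ((Complex.lt_def.1 htpos).2).symm
  have htreal : t = ((t.re : ℝ) : ℂ) := by
    apply Complex.ext <;> simp [htim]
  have hmw : star m ⬝ᵥ w = ((t.re : ℝ) : ℂ) := by
    rw [← star_dot w m, ← htdef, htreal]
    simp
  have hmt : star m ⬝ᵥ B *ᵥ m = ((t.re : ℝ) : ℂ) := by rw [hBm, hmw]
  have hsum_pos : 0 < ∑ i, ‖m i‖ ^ 2 := by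
    obtain ⟨i, hi⟩ := Function.ne_iff.1 hmne
    exact Finset.sum_pos' (fun j _ => by positivity) ⟨i, Finset.mem_univ i, pow_pos (norm_pos_iff.2 hi) 2⟩
  set cr : ℝ := Real.sqrt (∑ i, ‖m i‖ ^ 2) with hcr
  have hcpos : 0 < cr := Real.sqrt_pos.2 hsum_pos
  have hcne : ((cr : ℝ) : ℂ) ≠ 0 := by exact_mod_cast hcpos.ne'
  have hc2 : cr ^ 2 = ∑ i, ‖m i‖ ^ 2 := Real.sq_sqrt hsum_pos.le
  have hstarc : star (((cr : ℝ) : ℂ)⁻¹) = ((cr : ℝ) : ℂ)⁻¹ := by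
    simp [Complex.star_def, map_inv₀, Complex.conj_ofReal]
  have hvv : star vstar ⬝ᵥ vstar = 1 := by
    rw [hv, star_smul, smul_dotProduct, dotProduct_smul, dot_self_eq, ← hc2, smul_eq_mul,
      smul_eq_mul, hstarc]
    field_simp
    push_cast
    ring
  refine ⟨?_, ?_, ?_, ?_⟩
  · -- the inequality
    intro A hA htr
    obtain ⟨C, hC⟩ : ∃ C : Matrix (Fin N) (Fin N) ℂ, A = Cᴴ * C := by
      open scoped MatrixOrder in exact CStarAlgebra.nonneg_iff_eq_star_mul_self.mp hA.nonneg
    have hbA : 0 ≤ (star b ⬝ᵥ A *ᵥ b).re := (Complex.nonneg_iff.1 (hA.dotProduct_mulVec_nonneg b)).1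
    have hden : 0 < (star b ⬝ᵥ A *ᵥ b).re + σ := by linarith
    rw [div_le_iff₀ hden]
    have hnum : (star w ⬝ᵥ A *ᵥ w).re = ∑ i, ‖(C *ᵥ w) i‖ ^ 2 := by
      rw [hC, quad_CT, dot_self_re]
    have hbe : (star b ⬝ᵥ A *ᵥ b).re = ∑ i, ‖(C *ᵥ b) i‖ ^ 2 := by
      rw [hC, quad_CT, dot_self_re]
    have htrC : ∑ i, ∑ j, ‖C i j‖ ^ 2 = 1 := by
      have h1 : A.trace.re = 1 := by rw [htr]; simp
      rw [hC] at h1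
      rw [← h1, trace, Complex.re_sum]
      rw [Finset.sum_comm]
      refine Finset.sum_congr rfl fun i _ => ?_
      have : (Cᴴ * C).diag i = star (fun j => C j i) ⬝ᵥ (fun j => C j i) := by
        simp [diag, Matrix.mul_apply, dotProduct, conjTranspose_apply]
      rw [this, dot_self_re]
    set u : Fin N → Fin N → ℂ := fun i => star (C i) with hu
    have hrow : ∀ i, ‖(C *ᵥ w) i‖ ^ 2 ≤ (star (u i) ⬝ᵥ B *ᵥ (u i)).re * t.re := by
      intro i
      have h1 : (C *ᵥ w) i = star (u i) ⬝ᵥ B *ᵥ m := by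
        rw [hBm]
        simp [hu, mulVec, dotProduct]
      rw [h1]
      have h2 := cs_aux hBpd.posSemidef (u i) m
      rwa [hmt, Complex.ofReal_re] at h2
    have hsum : (star w ⬝ᵥ A *ᵥ w).re ≤ (∑ i, (star (u i) ⬝ᵥ B *ᵥ (u i)).re) * t.re := by
      rw [hnum, Finset.sum_mul]
      exact Finset.sum_le_sum fun i _ => hrow i
    have hS : ∑ i, (star (u i) ⬝ᵥ B *ᵥ (u i)).re = (star b ⬝ᵥ A *ᵥ b).re + σ := by
      have hterm : ∀ i, (star (u i) ⬝ᵥ B *ᵥ (u i)).re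
          = ‖(C *ᵥ b) i‖ ^ 2 + σ * ∑ j, ‖C i j‖ ^ 2 := by
        intro i
        rw [hB, add_mulVec, dotProduct_add, vmv_mulVec, smul_mulVec, one_mulVec,
          dotProduct_smul, dotProduct_smul]
        have e1 : star b ⬝ᵥ u i = star ((C *ᵥ b) i) := by
          simp [hu, mulVec, dotProduct, star_sum, mul_comm]
        have e2 : star (u i) ⬝ᵥ b = (C *ᵥ b) i := by
          simp [hu, mulVec, dotProduct]
        have e3 : star (u i) ⬝ᵥ (u i) = ((∑ j, ‖C i j‖ ^ 2 : ℝ) : ℂ) := by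
          rw [dot_self_eq]
          congr 1
          exact Finset.sum_congr rfl fun j _ => by rw [hu]; simp
        rw [smul_eq_mul, smul_eq_mul, e1, e2, e3, Complex.add_re]
        congr 1
        · exact star_mul_self_re _
        · rw [show ((σ : ℂ) * ((∑ j, ‖C i j‖ ^ 2 : ℝ) : ℂ)) = ((σ * ∑ j, ‖C i j‖ ^ 2 : ℝ) : ℂ) by
            push_cast; ring]
          exact Complex.ofReal_re _
      rw [Finset.sum_congr rfl fun i _ => hterm i, Finset.sum_add_distrib, ← Finset.mul_sum,
        htrC, hbe, mul_one]
    rw [hS] at hsum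
    linarith [hsum]
  · rw [hAstar]
    exact vmv_posSemidef vstar
  · have htrace : Astar.trace = star vstar ⬝ᵥ vstar := by
      rw [hAstar]
      simp [Matrix.trace, Matrix.diag, vecMulVec_apply, dotProduct, mul_comm]
    rw [htrace, hvv]
  · have hq : ∀ x : Fin N → ℂ, star x ⬝ᵥ Astar *ᵥ x = (star vstar ⬝ᵥ x) * (star x ⬝ᵥ vstar) := by
      intro x
      rw [hAstar, vmv_mulVec, dotProduct_smul, smul_eq_mul]
    have hwv : star w ⬝ᵥ vstar = ((cr : ℝ) : ℂ)⁻¹ * ((t.re : ℝ) : ℂ) := by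
      rw [hv, dotProduct_smul, smul_eq_mul, ← htdef, ← htreal]
    have hvw : star vstar ⬝ᵥ w = ((cr : ℝ) : ℂ)⁻¹ * ((t.re : ℝ) : ℂ) := by
      rw [← star_dot w vstar, hwv]
      simp [Complex.star_def, _root_.map_mul, map_inv₀, Complex.conj_ofReal]
    have hnum : (star w ⬝ᵥ Astar *ᵥ w).re = (cr⁻¹ * t.re) ^ 2 := by
      rw [hq w, hwv, hvw,
        show (((cr : ℝ) : ℂ)⁻¹ * ((t.re : ℝ) : ℂ)) * (((cr : ℝ) : ℂ)⁻¹ * ((t.re : ℝ) : ℂ))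
          = (((cr⁻¹ * t.re) ^ 2 : ℝ) : ℂ) by push_cast; ring]
      exact Complex.ofReal_re _
    have hBv : star vstar ⬝ᵥ B *ᵥ vstar = ((cr⁻¹ ^ 2 * t.re : ℝ) : ℂ) := by
      rw [hv, star_smul, smul_dotProduct, mulVec_smul, dotProduct_smul, hmt, smul_eq_mul,
        smul_eq_mul, hstarc]
      push_cast
      ring
    have hden2 : (star b ⬝ᵥ Astar *ᵥ b).re + σ = cr⁻¹ ^ 2 * t.re := by
      have h2 : star vstar ⬝ᵥ B *ᵥ vstar = star b ⬝ᵥ Astar *ᵥ b + ((σ : ℝ) : ℂ) := by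
        rw [hB, add_mulVec, dotProduct_add, vmv_mulVec, smul_mulVec, one_mulVec,
          dotProduct_smul, dotProduct_smul, smul_eq_mul, smul_eq_mul, hvv, mul_one, hq b]
        ring
      have h3 := congrArg Complex.re (h2.symm.trans hBv)
      rw [Complex.add_re, Complex.ofReal_re, Complex.ofReal_re] at h3
      exact h3
    have h4 : cr⁻¹ ^ 2 * t.re ≠ 0 := ne_of_gt (mul_pos (pow_pos (inv_pos.2 hcpos) 2) htre)
    rw [hnum, hden2, div_eq_iff h4]
    ring
end

section
/- (Optimal jammer strategy with unknown CSI of Willie, single-antenna Bob.) Let N ≥ 2, h ∈ ℂ^N with h ≠ 0, and σ > 0. For an integer d with 1 ≤ d ≤ N and an N×d complex matrix V with orthonormal columns (Vᴴ V = I_d), define F(d,V) := d / ((1/d)·‖Vᴴ h‖² + σ). Then: (i) for all such (d,V), F(d,V) ≤ max{ (N−1)/σ , N² / (‖h‖² + N·σ) }; (ii) the value (N−1)/σ is attained by d = N−1 with the columns of V an orthonormal basis of the orthogonal complement of h, and the value N²/(‖h‖² + N·σ) is attained by d = N with V unitary; (iii) consequently the supremum of F equals (N−1)/σ if σ ≤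 ((N−1)/N)·‖h‖², and equals N²/(‖h‖² + N·σ) otherwise. -/
open Matrix

lemma aux_re (m : ℕ) (x : Fin m → ℂ) : (star x ⬝ᵥ x).re = ∑ j, ‖x j‖ ^ 2 := by
  rw [dotProduct, Complex.re_sum]
  refine Finset.sum_congr rfl fun j _ => ?_
  rw [Pi.star_apply, Complex.star_def, mul_comm, Complex.mul_conj,
    Complex.ofReal_re, Complex.normSq_eq_norm_sq]

lemma aux_sum {n : ℕ} (V : Matrix (Fin n) (Fin n) ℂ) (hV : Vᴴ * V = 1) (h : Fin n → ℂ) :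
    ∑ j, ‖(Vᴴ.mulVec h) j‖ ^ 2 = ∑ i, ‖h i‖ ^ 2 := by
  have hVV : V * Vᴴ = 1 := mul_eq_one_comm.mp hV
  have key : star (Vᴴ.mulVec h) ⬝ᵥ (Vᴴ.mulVec h) = star h ⬝ᵥ h := by
    rw [star_mulVec, conjTranspose_conjTranspose, dotProduct_mulVec, vecMul_vecMul, hVV,
      vecMul_one]
  rw [← aux_re _ _, ← aux_re _ _, key]

lemma aux_basis (N : ℕ) (hN : 2 ≤ N) (h : Fin N → ℂ) (hh : h ≠ 0) :
    ∃ V : Matrix (Fin N) (Fin (N-1)) ℂ, Vᴴ * V = 1 ∧ Vᴴ.mulVec h = 0 := by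
  set E := EuclideanSpace ℂ (Fin N)
  set h' : E := WithLp.toLp 2 h with hh'
  have hh'0 : h' ≠ 0 := fun H => hh (by simpa [hh'] using congrArg WithLp.ofLp H)
  set K : Submodule ℂ E := (ℂ ∙ (h' : E))ᗮ with hK
  have hsp : Module.finrank ℂ (ℂ ∙ (h' : E)) = 1 := finrank_span_singleton hh'0
  have hfr : Module.finrank ℂ K = N - 1 := by
    have h3 := Submodule.finrank_add_finrank_orthogonal (K := (ℂ ∙ (h' : E)))
    have hE : Module.finrank ℂ E = N := by simp [E]
    rw [hsp, hE, ← hK] at h3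
    omega
  let b : OrthonormalBasis (Fin (N-1)) ℂ K :=
    (stdOrthonormalBasis ℂ K).reindex (finCongr (by rw [hfr]))
  refine ⟨Matrix.of fun i j => (b j : E) i, ?_, ?_⟩
  · ext j k
    have := b.orthonormal
    rw [orthonormal_iff_ite] at this
    have h2 := this j k
    rw [Submodule.coe_inner, PiLp.inner_apply] at h2
    simp only [RCLike.inner_apply] at h2
    simpa [Matrix.mul_apply, Matrix.conjTranspose_apply, Matrix.one_apply, eq_comm, mul_comm] using h2
  · funext j
    have hmem : (b j : E) ∈ K := (b j).2
    have h1 : inner ℂ (h' : E) ((b j : E)) = (0 : ℂ) :=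
      (Submodule.mem_orthogonal _ _).mp hmem _ (Submodule.mem_span_singleton_self _)
    have h0 : inner ℂ ((b j : E)) (h' : E) = (0 : ℂ) := by
      rw [← inner_conj_symm, h1]; simp
    rw [PiLp.inner_apply] at h0
    simp only [RCLike.inner_apply] at h0
    simpa [Matrix.mulVec, dotProduct, Matrix.conjTranspose_apply, hh', mul_comm] using h0

/-- Optimal jammer strategy with unknown CSI of Willie and single-antenna Bob:
bound, attainment at null-space / isotropic strategies, and the threshold rule. -/
theorem stmt_6 (N : ℕ) (hN : 2 ≤ N) (h : Fin N → ℂ) (hh : h ≠ 0)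
    (σ : ℝ) (hσ : 0 < σ) :
    (∀ d : ℕ, 1 ≤ d → d ≤ N → ∀ V : Matrix (Fin N) (Fin d) ℂ, Vᴴ * V = 1 →
      (d : ℝ) / ((1 / (d : ℝ)) * (∑ j, ‖(Vᴴ.mulVec h) j‖ ^ 2) + σ)
        ≤ max (((N : ℝ) - 1) / σ)
            ((N : ℝ) ^ 2 / ((∑ i, ‖h i‖ ^ 2) + (N : ℝ) * σ))) ∧
    (∃ V : Matrix (Fin N) (Fin (N - 1)) ℂ, Vᴴ * V = 1 ∧ Vᴴ.mulVec h = 0 ∧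
      ((N - 1 : ℕ) : ℝ) /
          ((1 / ((N - 1 : ℕ) : ℝ)) * (∑ j, ‖(Vᴴ.mulVec h) j‖ ^ 2) + σ)
        = ((N : ℝ) - 1) / σ) ∧
    (∃ V : Matrix (Fin N) (Fin N) ℂ, Vᴴ * V = 1 ∧
      (N : ℝ) / ((1 / (N : ℝ)) * (∑ j, ‖(Vᴴ.mulVec h) j‖ ^ 2) + σ)
        = (N : ℝ) ^ 2 / ((∑ i, ‖h i‖ ^ 2) + (N : ℝ) * σ)) ∧
    sSup { r : ℝ | ∃ d : ℕ, 1 ≤ d ∧ d ≤ N ∧ ∃ V : Matrix (Fin N) (Fin d) ℂ,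
          Vᴴ * V = 1 ∧
          r = (d : ℝ) / ((1 / (d : ℝ)) * (∑ j, ‖(Vᴴ.mulVec h) j‖ ^ 2) + σ) }
      = if σ ≤ (((N : ℝ) - 1) / (N : ℝ)) * (∑ i, ‖h i‖ ^ 2)
        then ((N : ℝ) - 1) / σ
        else (N : ℝ) ^ 2 / ((∑ i, ‖h i‖ ^ 2) + (N : ℝ) * σ) := by
  have hNpos : (0 : ℝ) < N := by positivity
  have hN1 : (1 : ℝ) ≤ (N : ℝ) - 1 := by
    have : (2 : ℝ) ≤ N := by exact_mod_cast hN
    linarith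
  have hS0 : 0 < ∑ i, ‖h i‖ ^ 2 := by
    obtain ⟨i, hi⟩ := Function.ne_iff.mp hh
    exact Finset.sum_pos' (fun j _ => by positivity)
      ⟨i, Finset.mem_univ i, by simpa using pow_pos (norm_pos_iff.mpr hi) 2⟩
  set S := ∑ i, ‖h i‖ ^ 2 with hSdef
  set A := ((N : ℝ) - 1) / σ with hA
  set B := (N : ℝ) ^ 2 / (S + (N : ℝ) * σ) with hB
  have hSN : 0 < S + (N : ℝ) * σ := by positivity
  -- part (i)
  have part1 : ∀ d : ℕ, 1 ≤ d → d ≤ N → ∀ V : Matrix (Fin N) (Fin d) ℂ, Vᴴ * V = 1 →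
      (d : ℝ) / ((1 / (d : ℝ)) * (∑ j, ‖(Vᴴ.mulVec h) j‖ ^ 2) + σ) ≤ max A B := by
    intro d hd1 hdN V hV
    by_cases hdeq : d = N
    · subst hdeq
      rw [aux_sum V hV h, ← hSdef]
      refine le_trans (le_of_eq ?_) (le_max_right A B)
      rw [hB, div_eq_div_iff (by positivity) hSN.ne']
      field_simp
    · have hdle : d + 1 ≤ N := by omega
      have hdR : (d : ℝ) ≤ (N : ℝ) - 1 := by
        have : ((d : ℝ) + 1) ≤ N := by exact_mod_cast hdle
        linarith
      have hd0 : (0 : ℝ) < d := by exact_mod_cast hd1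
      have ht0 : (0 : ℝ) ≤ ∑ j, ‖(Vᴴ.mulVec h) j‖ ^ 2 :=
        Finset.sum_nonneg fun j _ => by positivity
      have hden : σ ≤ (1 / (d : ℝ)) * (∑ j, ‖(Vᴴ.mulVec h) j‖ ^ 2) + σ :=
        le_add_of_nonneg_left (by positivity)
      refine le_trans ?_ (le_max_left A B)
      calc (d : ℝ) / ((1 / (d : ℝ)) * (∑ j, ‖(Vᴴ.mulVec h) j‖ ^ 2) + σ)
          ≤ (d : ℝ) / σ := by gcongr
        _ ≤ A := by rw [hA]; gcongr
  -- null-space attainment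
  obtain ⟨V0, hV0, hV0h⟩ := aux_basis N hN h hh
  have hcast : ((N - 1 : ℕ) : ℝ) = (N : ℝ) - 1 := by
    rw [Nat.cast_sub (by omega), Nat.cast_one]
  have att1 : ((N - 1 : ℕ) : ℝ) /
      ((1 / ((N - 1 : ℕ) : ℝ)) * (∑ j, ‖(V0ᴴ.mulVec h) j‖ ^ 2) + σ) = A := by
    rw [hV0h, hA, hcast]
    simp
  -- isotropic attainment
  have att2 : (N : ℝ) / ((1 / (N : ℝ)) * (∑ j, ‖((1 : Matrix (Fin N) (Fin N) ℂ)ᴴ.mulVec h) j‖ ^ 2)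
      + σ) = B := by
    have h1 : (1 : Matrix (Fin N) (Fin N) ℂ)ᴴ.mulVec h = h := by
      rw [conjTranspose_one, one_mulVec]
    rw [h1, ← hSdef, hB, div_eq_div_iff (by positivity) hSN.ne']
    field_simp
  refine ⟨part1, ⟨V0, hV0, hV0h, att1⟩, ⟨1, by simp, att2⟩, ?_⟩
  -- supremum
  set T := { r : ℝ | ∃ d : ℕ, 1 ≤ d ∧ d ≤ N ∧ ∃ V : Matrix (Fin N) (Fin d) ℂ,
      Vᴴ * V = 1 ∧ r = (d : ℝ) / ((1 / (d : ℝ)) * (∑ j, ‖(Vᴴ.mulVec h) j‖ ^ 2) + σ) } with hT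
  have memA : A ∈ T := ⟨N - 1, by omega, by omega, V0, hV0, att1.symm⟩
  have memB : B ∈ T := ⟨N, by omega, le_refl N, 1, by simp, att2.symm⟩
  have ub : ∀ r ∈ T, r ≤ max A B := by
    rintro r ⟨d, hd1, hdN, V, hV, rfl⟩
    exact part1 d hd1 hdN V hV
  have hsup : sSup T = max A B := by
    apply le_antisymm
    · exact csSup_le ⟨A, memA⟩ ub
    · rcases max_cases A B with ⟨hm, _⟩ | ⟨hm, _⟩ <;> rw [hm]
      · exact le_csSup ⟨max A B, ub⟩ memA
      · exact le_csSup ⟨max A B, ub⟩ memB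
  rw [hsup]
  split_ifs with hcond
  · rw [div_mul_eq_mul_div, le_div_iff₀ hNpos] at hcond
    refine max_eq_left ?_
    rw [hA, hB, div_le_div_iff₀ hSN hσ]
    nlinarith
  · rw [not_le, div_mul_eq_mul_div, div_lt_iff₀ hNpos] at hcond
    refine max_eq_right ?_
    rw [hA, hB, div_le_div_iff₀ hσ hSN]
    nlinarith
end

section
/- (Single-beam optimality with multi-antenna Bob.) Let w ∈ ℂ^N, let H be an M×N complex matrix, let c ∈ ℂ^M with c ≠ 0, and let σ > 0. Then for every N×N complex positive semidefinite Hermitian matrix A with trace A = 1, Re(wᴴ A w) / ( Re(cᴴ (H A Hᴴ) c) + σ·‖c‖² ) ≤ sup over unit vectors v ∈ ℂ^N of |wᴴ v|² / ( |cᴴ H v|² + σ·‖c‖² ). Hence for any fixed linear filter c at Bob, the jammer's optimum over trace-one PSD covariances is achieved in the limit by rank-one matrices: all available power in a single direction. -/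
open Matrix
open scoped ComplexOrder

lemma dot_norm_comm {n : ℕ} (u t : Fin n → ℂ) : ‖star u ⬝ᵥ t‖ = ‖star t ⬝ᵥ u‖ := by
  rw [star_dotProduct, norm_star]

lemma quad_form {N : ℕ} {A : Matrix (Fin N) (Fin N) ℂ} (hA : A.PosSemidef)
    (x : Fin N → ℂ) :
    (star x ⬝ᵥ A.mulVec x).re
      = ∑ i, hA.1.eigenvalues i * ‖star (⇑(hA.1.eigenvectorBasis i)) ⬝ᵥ x‖ ^ 2 := by
  set U : Matrix (Fin N) (Fin N) ℂ := (hA.1.eigenvectorUnitary : Matrix (Fin N) (Fin N) ℂ) with hU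
  set d : Fin N → ℂ := RCLike.ofReal ∘ hA.1.eigenvalues with hd
  set y : Fin N → ℂ := star U *ᵥ x with hy
  have hyi : ∀ i, y i = star (⇑(hA.1.eigenvectorBasis i)) ⬝ᵥ x := by
    intro i
    simp [hy, mulVec, dotProduct, hU]
  have key : star x ⬝ᵥ A.mulVec x = star y ⬝ᵥ (diagonal d).mulVec y := by
    conv_lhs => rw [hA.1.spectral_theorem, Unitary.conjStarAlgAut_apply]
    rw [← hU, ← hd, ← mulVec_mulVec, ← mulVec_mulVec, dotProduct_mulVec]
    congr 1
    rw [hy, star_mulVec, star_eq_conjTranspose, conjTranspose_conjTranspose]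
  rw [key]
  have : star y ⬝ᵥ (diagonal d).mulVec y = ∑ i, d i * (star (y i) * y i) := by
    simp [dotProduct, mulVec_diagonal]
    ring_nf
    exact Finset.sum_congr rfl fun i _ => by ring
  rw [this, Complex.re_sum]
  refine Finset.sum_congr rfl fun i _ => ?_
  rw [← hyi i]
  have hdi : d i = Complex.ofReal (hA.1.eigenvalues i) := rfl
  have h2 : star (y i) * y i = Complex.ofReal (‖y i‖ ^ 2) := by
    rw [show star (y i) = (starRingEnd ℂ) (y i) from rfl,
      ← Complex.normSq_eq_conj_mul_self, Complex.normSq_eq_norm_sq]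
  rw [hdi, h2, ← Complex.ofReal_mul, Complex.ofReal_re]

/-- Single-beam optimality with multi-antenna Bob: for any fixed filter `c`, the
post-filtering SNR ratio at any trace-one PSD covariance is bounded by the supremum
of the rank-one (single direction) ratios. -/
theorem stmt_7 (N M : ℕ) (w : Fin N → ℂ) (H : Matrix (Fin M) (Fin N) ℂ)
    (c : Fin M → ℂ) (hc : c ≠ 0) (σ : ℝ) (hσ : 0 < σ)
    (A : Matrix (Fin N) (Fin N) ℂ) (hA : A.PosSemidef) (htr : A.trace = 1) :
    (star w ⬝ᵥ A.mulVec w).re /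
        ((star c ⬝ᵥ (H * A * Hᴴ).mulVec c).re + σ * ∑ i, ‖c i‖ ^ 2)
      ≤ sSup { r : ℝ | ∃ v : Fin N → ℂ, (∑ i, ‖v i‖ ^ 2) = 1 ∧
          r = ‖star w ⬝ᵥ v‖ ^ 2 /
              (‖star c ⬝ᵥ H.mulVec v‖ ^ 2 + σ * ∑ i, ‖c i‖ ^ 2) } := by
  classical
  set lam := hA.1.eigenvalues with hlam
  set v : Fin N → Fin N → ℂ := fun i => ⇑(hA.1.eigenvectorBasis i) with hv
  set s : ℝ := σ * ∑ i, ‖c i‖ ^ 2 with hs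
  have hcs : 0 < ∑ i, ‖c i‖ ^ 2 := by
    obtain ⟨j, hj⟩ := Function.ne_iff.mp hc
    exact Finset.sum_pos' (fun i _ => by positivity)
      ⟨j, Finset.mem_univ j, pow_pos (norm_pos_iff.mpr hj) 2⟩
  have hs0 : 0 < s := mul_pos hσ hcs
  set a : Fin N → ℝ := fun i => ‖star w ⬝ᵥ v i‖ ^ 2 with ha
  set b : Fin N → ℝ := fun i => ‖star c ⬝ᵥ H.mulVec (v i)‖ ^ 2 with hb
  have hlam0 : ∀ i, 0 ≤ lam i := fun i => hA.eigenvalues_nonneg i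
  have hsum1 : ∑ i, lam i = 1 := by
    have h1 : A.trace = ∑ i, (lam i : ℂ) := by
      conv_lhs => rw [hA.1.spectral_theorem, Unitary.conjStarAlgAut_apply]
      rw [trace_mul_cycle]
      rw [show (star (hA.1.eigenvectorUnitary : Matrix (Fin N) (Fin N) ℂ)) *
          (hA.1.eigenvectorUnitary : Matrix (Fin N) (Fin N) ℂ) = 1 from
        Unitary.coe_star_mul_self _, one_mul, trace_diagonal]
      rfl
    have := h1.symm.trans htr
    have := congrArg Complex.re this
    simpa [Complex.re_sum] using this
  have hN : Nonempty (Fin N) := by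
    rcases Nat.eq_zero_or_pos N with h | h
    · exfalso; subst h; simp at hsum1
    · exact ⟨⟨0, h⟩⟩
  have hnum : (star w ⬝ᵥ A.mulVec w).re = ∑ i, lam i * a i := by
    rw [quad_form hA w]
    exact Finset.sum_congr rfl fun i _ => by rw [ha]; rw [dot_norm_comm]
  have hden : (star c ⬝ᵥ (H * A * Hᴴ).mulVec c).re = ∑ i, lam i * b i := by
    have hx : star c ⬝ᵥ (H * A * Hᴴ).mulVec c
        = star (Hᴴ.mulVec c) ⬝ᵥ A.mulVec (Hᴴ.mulVec c) := by
      rw [← mulVec_mulVec, ← mulVec_mulVec, dotProduct_mulVec]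
      congr 1
      rw [star_mulVec, conjTranspose_conjTranspose]
    rw [hx, quad_form hA]
    refine Finset.sum_congr rfl fun i _ => ?_
    congr 1
    rw [dot_norm_comm, star_mulVec, conjTranspose_conjTranspose, ← dotProduct_mulVec]
  have hvnorm : ∀ i, (∑ j, ‖v i j‖ ^ 2) = 1 := by
    intro i
    have h1 : ‖hA.1.eigenvectorBasis i‖ = 1 := hA.1.eigenvectorBasis.orthonormal.1 i
    have h2 := EuclideanSpace.norm_eq (hA.1.eigenvectorBasis i)
    rw [h1] at h2
    have h3 : (0:ℝ) ≤ ∑ j, ‖hA.1.eigenvectorBasis i j‖ ^ 2 :=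
      Finset.sum_nonneg fun j _ => sq_nonneg _
    have h4 := Real.sq_sqrt h3
    rw [← h2, one_pow] at h4
    exact h4.symm
  -- bounded above
  have hbdd : BddAbove { r : ℝ | ∃ v : Fin N → ℂ, (∑ i, ‖v i‖ ^ 2) = 1 ∧
      r = ‖star w ⬝ᵥ v‖ ^ 2 / (‖star c ⬝ᵥ H.mulVec v‖ ^ 2 + s) } := by
    refine ⟨(∑ i, ‖w i‖ ^ 2) / s, ?_⟩
    rintro r ⟨u, hu, rfl⟩
    have hCS : ‖star w ⬝ᵥ u‖ ^ 2 ≤ ∑ i, ‖w i‖ ^ 2 := by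
      have h1 : ‖star w ⬝ᵥ u‖ ≤ ∑ i, ‖w i‖ * ‖u i‖ := by
        refine (norm_sum_le _ _).trans ?_
        refine Finset.sum_le_sum fun i _ => ?_
        simp [norm_mul, Pi.star_apply, norm_star]
      calc ‖star w ⬝ᵥ u‖ ^ 2 ≤ (∑ i, ‖w i‖ * ‖u i‖) ^ 2 := by
            exact pow_le_pow_left₀ (norm_nonneg _) h1 2
        _ ≤ (∑ i, ‖w i‖ ^ 2) * ∑ i, ‖u i‖ ^ 2 :=
            Finset.sum_mul_sq_le_sq_mul_sq _ _ _
        _ = ∑ i, ‖w i‖ ^ 2 := by rw [hu, mul_one]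
    exact div_le_div₀ (Finset.sum_nonneg fun i _ => by positivity) hCS hs0
      (le_add_of_nonneg_left (by positivity))
  -- maximizer
  obtain ⟨i0, _, hmax⟩ := Finset.exists_max_image Finset.univ
    (fun i => a i / (b i + s)) Finset.univ_nonempty
  set R : ℝ := a i0 / (b i0 + s) with hR
  have hmem : R ∈ { r : ℝ | ∃ v : Fin N → ℂ, (∑ i, ‖v i‖ ^ 2) = 1 ∧
      r = ‖star w ⬝ᵥ v‖ ^ 2 / (‖star c ⬝ᵥ H.mulVec v‖ ^ 2 + s) } :=
    ⟨v i0, hvnorm i0, rfl⟩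
  have hratio : (star w ⬝ᵥ A.mulVec w).re /
      ((star c ⬝ᵥ (H * A * Hᴴ).mulVec c).re + s) ≤ R := by
    rw [hnum, hden]
    have hDrw : (∑ i, lam i * b i) + s = ∑ i, lam i * (b i + s) := by
      simp only [mul_add, Finset.sum_add_distrib, ← Finset.sum_mul, hsum1, one_mul]
    rw [hDrw]
    have hD0 : 0 < ∑ i, lam i * (b i + s) := by
      have h1 : s ≤ ∑ i, lam i * (b i + s) := by
        calc s = ∑ i, lam i * s := by simp [← Finset.sum_mul, hsum1]
          _ ≤ ∑ i, lam i * (b i + s) := Finset.sum_le_sum fun i _ =>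
              mul_le_mul_of_nonneg_left (le_add_of_nonneg_left (by positivity)) (hlam0 i)
      exact lt_of_lt_of_le hs0 h1
    rw [div_le_iff₀ hD0, Finset.mul_sum]
    refine Finset.sum_le_sum fun i _ => ?_
    have hbs : 0 < b i + s := add_pos_of_nonneg_of_pos (by positivity) hs0
    have h1 : a i ≤ R * (b i + s) := by
      rw [← div_le_iff₀ hbs]; exact hmax i (Finset.mem_univ i)
    calc lam i * a i ≤ lam i * (R * (b i + s)) :=
          mul_le_mul_of_nonneg_left h1 (hlam0 i)
      _ = R * (lam i * (b i + s)) := by ring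
  exact hratio.trans (le_csSup hbdd hmem)
end

section
/- (Chernoff lower-tail bound for the chi-squared distribution with 2d degrees of freedom; key estimate in Theorem 2.) Let d ≥ 1 be a natural number and let μ be the Gamma distribution on ℝ with shape d and rate 1/2 (the chi-squared distribution with 2d degrees of freedom). Then for every real β with 0 < β < 2d, μ{ x ∈ ℝ : x < β } ≤ ( (β/(2d)) · e^{1 − β/(2d)} )^d. -/
open MeasureTheory ProbabilityTheory

/-- Chernoff lower-tail bound for the chi-squared distribution with `2d` degrees
of freedom (the Gamma distribution with shape `d` and rate `1/2`). -/
theorem stmt_13 (d : ℕ) (hd : 1 ≤ d) (β : ℝ) (hβ : 0 < β) (hβ2 : β < 2 * d) :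
    gammaMeasure d (1 / 2) {x : ℝ | x < β}
      ≤ ENNReal.ofReal ((β / (2 * d) * Real.exp (1 - β / (2 * d))) ^ d) := by
  have hd0 : (0:ℝ) < d := by exact_mod_cast Nat.pos_of_ne_zero (by omega)
  set C : ℝ := (β / (2 * d) * Real.exp (1 - β / (2 * d))) ^ d with hCdef
  have hC : 0 ≤ C := by positivity
  set r' : ℝ := d / β with hr'def
  have hr' : 0 < r' := by positivity
  have hrhalf : (1/2:ℝ) ≤ r' := by
    rw [hr'def, le_div_iff₀ hβ]; linarith
  have hr'β : r' * β = d := by rw [hr'def]; field_simp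
  have hdexp : (d:ℝ) * (1 - β / (2 * d)) = d - β / 2 := by field_simp
  -- key real inequality
  have hrealineq : ∀ x : ℝ, 0 ≤ x → x ≤ β →
      (1/2:ℝ)^(d:ℕ) * Real.exp (-(1/2*x)) ≤ C * r'^(d:ℕ) * Real.exp (-(r'*x)) := by
    intro x hx0 hxβ
    have h1 : C * r'^(d:ℕ) = (1/2:ℝ)^(d:ℕ) * Real.exp ((d:ℝ) * (1 - β / (2 * d))) := by
      rw [hCdef, mul_pow, ← Real.exp_nat_mul, mul_assoc, mul_comm _ (r'^(d:ℕ)),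
        ← mul_assoc, ← mul_pow]
      have h12 : β / (2 * d) * r' = 1/2 := by
        rw [hr'def]; field_simp
      rw [h12]
    rw [h1, mul_assoc, ← Real.exp_add]
    apply mul_le_mul_of_nonneg_left _ (by positivity)
    apply Real.exp_le_exp.mpr
    rw [hdexp]
    nlinarith [mul_le_mul_of_nonneg_left hxβ (by linarith : (0:ℝ) ≤ r' - 1/2)]
  -- pointwise bound on the pdf
  have hpt : ∀ x ∈ Set.Iio β,
      gammaPDF (d:ℝ) (1/2) x ≤ ENNReal.ofReal C * gammaPDF (d:ℝ) r' x := by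
    intro x hx
    rcases lt_or_ge x 0 with hx0 | hx0
    · rw [gammaPDF_of_neg hx0, gammaPDF_of_neg hx0]; simp
    · rw [gammaPDF_of_nonneg hx0, gammaPDF_of_nonneg hx0, ← ENNReal.ofReal_mul hC]
      apply ENNReal.ofReal_le_ofReal
      have hx' := hrealineq x hx0 (le_of_lt hx)
      have hG : 0 < Real.Gamma d := Real.Gamma_pos_of_pos hd0
      have hxp : 0 ≤ x ^ ((d:ℝ) - 1) := Real.rpow_nonneg hx0 _
      have hrp : ∀ s : ℝ, 0 < s → s ^ (d:ℝ) = s ^ (d:ℕ) := fun s hs ↦ by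
        rw [Real.rpow_natCast]
      rw [hrp _ (by norm_num), hrp _ hr']
      calc (1/2:ℝ)^(d:ℕ) / Real.Gamma d * x ^ ((d:ℝ)-1) * Real.exp (-(1/2*x))
          = ((1/2:ℝ)^(d:ℕ) * Real.exp (-(1/2*x))) * (x ^ ((d:ℝ)-1) / Real.Gamma d) := by
            ring
        _ ≤ (C * r'^(d:ℕ) * Real.exp (-(r'*x))) * (x ^ ((d:ℝ)-1) / Real.Gamma d) := by
            apply mul_le_mul_of_nonneg_right hx' (by positivity)
        _ = C * (r'^(d:ℕ) / Real.Gamma d * x ^ ((d:ℝ)-1) * Real.exp (-(r'*x))) := by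
            ring
  -- integrate
  have hmeas : MeasurableSet (Set.Iio β) := measurableSet_Iio
  have hset : {x : ℝ | x < β} = Set.Iio β := rfl
  rw [hset, gammaMeasure, withDensity_apply _ hmeas]
  calc ∫⁻ x in Set.Iio β, gammaPDF (d:ℝ) (1/2) x
      ≤ ∫⁻ x in Set.Iio β, ENNReal.ofReal C * gammaPDF (d:ℝ) r' x := by
        refine setLIntegral_mono ?_ hpt
        exact (ENNReal.measurable_ofReal.comp (measurable_gammaPDFReal _ _)).const_mul _
    _ = ENNReal.ofReal C * ∫⁻ x in Set.Iio β, gammaPDF (d:ℝ) r' x := by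
        rw [lintegral_const_mul' _ _ ENNReal.ofReal_ne_top]
    _ ≤ ENNReal.ofReal C * ∫⁻ x, gammaPDF (d:ℝ) r' x := by
        gcongr
        exact Measure.restrict_le_self
    _ = ENNReal.ofReal C := by
        rw [lintegral_gammaPDF_eq_one hd0 hr', mul_one]
end
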